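/- If f : ℝⁿ₊ → ℝⁿ₊ is concave with respect to the componentwise order (i.e., f(t·x + (1-t)·y) ≥ t·f(x) + (1-t)·f(y) for all x, y in the nonnegative orthant and t ∈ (0,1)), then f is monotone: x ≤ y implies f(x) ≤ f(y) for all x, y in the nonnegative orthant. -/

import Mathlib

/-- A nonnegative concave mapping on the nonnegative orthant is monotone. -/
theorem nc_mapping_monotone {n : ℕ} (f : (Fin n → ℝ) → (Fin n → ℝ))
    (hmap : ∀ x : Fin n → ℝ, 0 ≤ x → 0 ≤ f x)
    (hconc : ∀ x y : Fin n → ℝ, 0 ≤ x → 0 ≤ y → ∀ t : ℝ, 0 < t → t < 1 →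
      t • f x + (1 - t) • f y ≤ f (t • x + (1 - t) • y)) :
    ∀ x y : Fin n → ℝ, 0 ≤ x → 0 ≤ y → x ≤ y → f x ≤ f y := by
  intro x y hx hy hxy
  -- key: for every t ∈ (0,1), t • f x ≤ f y
  have key : ∀ t : ℝ, 0 < t → t < 1 → ∀ i, t * f x i ≤ f y i := by
    intro t ht ht1 i
    have h1t : (0:ℝ) < 1 - t := by linarith
    set w : Fin n → ℝ := (1 - t)⁻¹ • (y - t • x) with hw
    have hwpos : 0 ≤ w := by
      intro j
      have h1 : x j ≤ y j := hxy j
      have h2 : (0:ℝ) ≤ x j := hx j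
      have : t * x j ≤ y j := by nlinarith
      have : 0 ≤ y j - t * x j := by linarith
      simp only [hw, Pi.smul_apply, Pi.sub_apply, Pi.smul_apply, smul_eq_mul]
      positivity
    have hcomb : t • x + (1 - t) • w = y := by
      funext j
      simp only [hw, Pi.add_apply, Pi.smul_apply, Pi.sub_apply, smul_eq_mul]
      field_simp
      ring
    have := hconc x w hx hwpos t ht ht1
    rw [hcomb] at this
    have h2 := this i
    have h3 : 0 ≤ (1 - t) * f w i := by
      have h4 : (0:ℝ) ≤ f w i := hmap w hwpos i
      positivity
    simp only [Pi.add_apply, Pi.smul_apply, smul_eq_mul] at h2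
    linarith
  intro i
  by_contra h
  push_neg at h
  have ha : 0 ≤ f y i := hmap y hy i
  have hb : 0 < f x i := lt_of_le_of_lt ha h
  have ht : (0:ℝ) < (f y i + f x i) / (2 * f x i) := by positivity
  have ht1 : (f y i + f x i) / (2 * f x i) < 1 := by
    rw [div_lt_one (by positivity)]; linarith
  have := key _ ht ht1 i
  rw [div_mul_eq_mul_div] at this
  rw [div_le_iff₀ (by positivity)] at this
  nlinarith
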